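/- arXiv:1305.1415 — 2 statements merged into one kernel-verified Lean document; each statement's English description precedes it below -/
import Mathlib

section
/- A clique in the IDNC graph yields an instantly decodable transmission: let Γ_i, Ω_i ⊆ {1,…,n} with Γ_i ∩ Ω_i = ∅ for each client i, and let G be the graph whose vertices are the pairs (i,j) with j ∈ Ω_i, with distinct vertices (i,j) and (k,l) adjacent iff j = l or (j ∈ Γ_k and l ∈ Γ_i). Let K be a clique of G and let L = {j : (i,j) ∈ K for some i} be the set of packet indices occurring in K. Then for every (i,j) ∈ K one has L \ {j} ⊆ Γ_i; consequently, if the packets p_1,…,p_n lie in a vector space over F_2 and the XOR s = ∑_{l ∈ L} p_l is broadcast, every client i with (i,j) ∈ K recovers its wanted packet as p_j = s + ∑_{l ∈ L \ {j}} p_l, where all summands in the correction term lie in its Has set. -/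
/-- Adjacency in the IDNC graph: vertices are pairs `(i,j)` (client `i` wants packet
`j`), and `(i,j)`, `(k,l)` are adjacent iff `j = l`, or packet `j` is held by client
`k` and packet `l` is held by client `i`. -/
def idncAdj {n : ℕ} (Γ : Fin n → Finset (Fin n))
    (v w : Fin n × Fin n) : Prop :=
  v.2 = w.2 ∨ (v.2 ∈ Γ w.1 ∧ w.2 ∈ Γ v.1)

/-- A clique in the IDNC graph yields an instantly decodable transmission: if `K` is a
clique (vertices `(i,j)` with `j ∈ Ω i`, pairwise adjacent) and
`L = {j : (i,j) ∈ K for some i}`, then for every `(i,j) ∈ K` we have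
`L \ {j} ⊆ Γ i`; consequently, broadcasting the XOR `s = ∑_{l ∈ L} p_l` of packets in
a vector space over `F₂` lets every client `i` with `(i,j) ∈ K` recover
`p_j = s + ∑_{l ∈ L \ {j}} p_l`, with all correction summands held by client `i`. -/
theorem idnc_clique_instantly_decodable
    {n : ℕ} (Γ Ω : Fin n → Finset (Fin n))
    (hdisj : ∀ i, Disjoint (Γ i) (Ω i))
    (K : Finset (Fin n × Fin n))
    (hKvert : ∀ v ∈ K, v.2 ∈ Ω v.1)
    (hKclique : ∀ v ∈ K, ∀ w ∈ K, v ≠ w → idncAdj Γ v w)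
    (L : Finset (Fin n)) (hL : L = K.image Prod.snd)
    (V : Type*) [AddCommGroup V] [Module (ZMod 2) V]
    (pk : Fin n → V) (s : V) (hs : s = ∑ l ∈ L, pk l) :
    (∀ i j, (i, j) ∈ K → ∀ l ∈ L, l ≠ j → l ∈ Γ i) ∧
    (∀ i j, (i, j) ∈ K → pk j = s + ∑ l ∈ L.erase j, pk l) := by
  constructor
  · intro i j hij l hl hlj
    subst hL
    obtain ⟨⟨k, l'⟩, hk, rfl⟩ := Finset.mem_image.mp hl
    have hne : (i, j) ≠ (k, l') := by
      intro h; exact hlj (congrArg Prod.snd h).symm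
    rcases hKclique _ hij _ hk hne with h | ⟨_, h⟩
    · exact absurd h.symm hlj
    · exact h
  · intro i j hij
    have hjL : j ∈ L := by
      subst hL; exact Finset.mem_image.mpr ⟨(i, j), hij, rfl⟩
    have hsum : s = pk j + ∑ l ∈ L.erase j, pk l := by
      rw [hs, Finset.add_sum_erase _ _ hjL]
    have h2 : ∀ x : V, x + x = 0 := by
      intro x
      have := two_smul (ZMod 2) x
      rw [show (2 : ZMod 2) = 0 by decide, zero_smul] at this
      exact this.symm
    rw [hsum, add_assoc, h2, add_zero]
end

section
/- A clique in a client's local graph yields a transmittable instantly decodable packet: let Γ_i, Ω_i ⊆ {1,…,n} with Γ_i ∩ Ω_i = ∅ for each client i, fix a client u, and let G_u be the graph whose vertices are the pairs (i,j) with j ∈ Ω_i, with distinct vertices (i,j) and (k,l) adjacent iff i ≠ k and either (j = l and j ∈ Γ_u) or (j ∈ Γ_k, l ∈ Γ_i, j ∈ Γ_u and l ∈ Γ_u). Let K be a clique of G_u with |K| ≥ 2 and let L = {j : (i,j) ∈ K for some i}. Then (a) L ⊆ Γ_u, so client u can form the XOR s = ∑_{l ∈ L} p_l of packets it holds, and (b)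 for every (i,j) ∈ K one has L \ {j} ⊆ Γ_i, so if the packets lie in a vector space over F_2, each client i with (i,j) ∈ K recovers p_j = s + ∑_{l ∈ L \ {j}} p_l from packets it holds. -/
/-- Adjacency in the local IDNC graph of client `u`: vertices are pairs `(i,j)`
(client `i` wants packet `j`), and `(i,j)`, `(k,l)` are adjacent iff `i ≠ k` and
either (`j = l` and `j ∈ Γ u`) or (`j ∈ Γ k`, `l ∈ Γ i`, `j ∈ Γ u` and `l ∈ Γ u`). -/
def localIdncAdj {n : ℕ} (Γ : Fin n → Finset (Fin n)) (u : Fin n)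
    (v w : Fin n × Fin n) : Prop :=
  v.1 ≠ w.1 ∧
    ((v.2 = w.2 ∧ v.2 ∈ Γ u) ∨
      (v.2 ∈ Γ w.1 ∧ w.2 ∈ Γ v.1 ∧ v.2 ∈ Γ u ∧ w.2 ∈ Γ u))

/-- A clique in client `u`'s local graph yields a transmittable instantly decodable
packet: if `K` is a clique of `G_u` with `|K| ≥ 2` and `L = {j : (i,j) ∈ K}`, then
(a) `L ⊆ Γ u`, so `u` can form the XOR `s = ∑_{l ∈ L} p_l` of packets it holds, and
(b) for every `(i,j) ∈ K`, `L \ {j} ⊆ Γ i`, so in a vector space over `F₂` client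
`i` recovers `p_j = s + ∑_{l ∈ L \ {j}} p_l` from packets it holds. -/
theorem local_idnc_clique_transmittable
    {n : ℕ} (Γ Ω : Fin n → Finset (Fin n))
    (hdisj : ∀ i, Disjoint (Γ i) (Ω i))
    (u : Fin n)
    (K : Finset (Fin n × Fin n))
    (hKvert : ∀ v ∈ K, v.2 ∈ Ω v.1)
    (hKclique : ∀ v ∈ K, ∀ w ∈ K, v ≠ w → localIdncAdj Γ u v w)
    (hKcard : 2 ≤ K.card)
    (L : Finset (Fin n)) (hL : L = K.image Prod.snd)
    (V : Type*) [AddCommGroup V] [Module (ZMod 2) V]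
    (pk : Fin n → V) (s : V) (hs : s = ∑ l ∈ L, pk l) :
    (L ⊆ Γ u) ∧
    (∀ i j, (i, j) ∈ K → ∀ l ∈ L, l ≠ j → l ∈ Γ i) ∧
    (∀ i j, (i, j) ∈ K → pk j = s + ∑ l ∈ L.erase j, pk l) := by
  have hLGu : L ⊆ Γ u := by
    intro j hj
    rw [hL] at hj
    obtain ⟨v, hv, hvj⟩ := Finset.mem_image.mp hj
    obtain ⟨w, hw, hwv⟩ : ∃ w ∈ K, w ≠ v := by
      by_contra h
      push_neg at h
      have : K ⊆ {v} := fun x hx => Finset.mem_singleton.mpr (h x hx)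
      have := Finset.card_le_card this
      simp at this; omega
    have hadj := hKclique v hv w hw (Ne.symm hwv)
    rcases hadj.2 with ⟨_, h⟩ | ⟨_, _, h, _⟩ <;> exact hvj ▸ h
  have hb : ∀ i j, (i, j) ∈ K → ∀ l ∈ L, l ≠ j → l ∈ Γ i := by
    intro i j hij l hl hlj
    rw [hL] at hl
    obtain ⟨w, hw, hwl⟩ := Finset.mem_image.mp hl
    have hne : (i, j) ≠ w := by
      intro h; rw [← h] at hwl; exact hlj hwl.symm
    have hadj := hKclique (i, j) hij w hw hne
    rcases hadj.2 with ⟨h, _⟩ | ⟨_, h, _, _⟩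
    · exact absurd (hwl ▸ h.symm) hlj
    · exact hwl ▸ h
  refine ⟨hLGu, hb, ?_⟩
  intro i j hij
  have hjL : j ∈ L := by
    rw [hL]; exact Finset.mem_image.mpr ⟨(i, j), hij, rfl⟩
  have hsum : s = pk j + ∑ l ∈ L.erase j, pk l := by
    rw [hs, Finset.add_sum_erase _ _ hjL]
  rw [hsum, add_assoc]
  have : ∑ l ∈ L.erase j, pk l + ∑ l ∈ L.erase j, pk l = 0 := by
    rw [← two_smul (ZMod 2)]
    simp [show (2 : ZMod 2) = 0 from rfl]
  rw [this, add_zero]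
end
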